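/- arXiv:2004.02287 — 2 statements merged into one kernel-verified Lean document; each statement's English description precedes it below -/
import Mathlib

section
/- For every real numbers α, β and parameters p, q ∈ [0,1] with p + q > 0, one has |sin α − sin β − (α − β)·cos β| ≤ |α − β|^(p+q+1) / (2^(p+q−1)·(p+q+1)) + q·|α − β|^(p+q)·|β| / (2^(p+q−2)·(p+q)). -/
open MeasureTheory intervalIntegral

lemma my_abs_sin_le_rpow {r : ℝ} (hr0 : 0 ≤ r) (hr1 : r ≤ 1) (x : ℝ) :
    |Real.sin x| ≤ |x| ^ r := by
  rcases eq_or_ne x 0 with rfl | hx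
  · simp [Real.rpow_nonneg]
  have hx0 : 0 < |x| := abs_pos.mpr hx
  rcases le_or_gt 1 |x| with h1 | h1
  · calc |Real.sin x| ≤ 1 := Real.abs_sin_le_one x
      _ = |x| ^ (0:ℝ) := by simp
      _ ≤ |x| ^ r := Real.rpow_le_rpow_of_exponent_le h1 hr0
  · calc |Real.sin x| ≤ |x| := Real.abs_sin_le_abs
      _ = |x| ^ (1:ℝ) := by simp
      _ ≤ |x| ^ r := Real.rpow_le_rpow_of_exponent_ge hx0 h1.le hr1

lemma my_bernoulli {a b q : ℝ} (ha : 0 < a) (hb : 0 ≤ b) (hq0 : 0 ≤ q) (hq1 : q ≤ 1) :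
    (a + b) ^ q ≤ a ^ q + q * b * a ^ (q - 1) := by
  have h1 : (a + b) ^ q = a ^ q * (1 + b / a) ^ q := by
    rw [← Real.mul_rpow ha.le (by positivity)]
    rw [mul_add, mul_one, mul_div_cancel₀ _ ha.ne']
  have h2 : (1 + b / a) ^ q ≤ 1 + q * (b / a) :=
    rpow_one_add_le_one_add_mul_self ((by norm_num : (-1:ℝ) ≤ 0).trans (div_nonneg hb ha.le)) hq0 hq1
  calc (a + b) ^ q ≤ a ^ q * (1 + q * (b / a)) := by
        rw [h1]; exact mul_le_mul_of_nonneg_left h2 (Real.rpow_nonneg ha.le q)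
    _ = a ^ q + q * b * a ^ (q - 1) := by
        rw [Real.rpow_sub ha, Real.rpow_one]
        field_simp

lemma my_integrable (β h r : ℝ) (hr : -1 < r) :
    IntervalIntegrable (fun t => ((t - β) / 2) ^ (r:ℝ)) volume β (β + h) := by
  have h1 : IntervalIntegrable (fun u : ℝ => u ^ r) volume 0 (h / 2) :=
    intervalIntegrable_rpow' hr
  have h2 := h1.comp_mul_right (c := 1/2)
  have h3 := h2.comp_sub_right β
  have e0 : (0:ℝ) / (1/2) + β = β := by ring
  have e1 : h / 2 / (1/2) + β = β + h := by ring
  rw [e0, e1] at h3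
  convert h3 using 2 with t
  ring_nf

lemma my_integral_eval (β h r : ℝ) (hr : -1 < r) :
    ∫ t in β..(β + h), ((t - β) / 2) ^ (r:ℝ) = 2 * ((h / 2) ^ (r + 1)) / (r + 1) := by
  have e1 : (∫ t in β..(β + h), ((t - β) / 2) ^ (r:ℝ)) = ∫ u in (0:ℝ)..h, (u / 2) ^ r := by
    have := intervalIntegral.integral_comp_sub_right (a := β) (b := β + h)
      (fun u : ℝ => (u / 2) ^ r) β
    simpa using this
  have e2 : (∫ u in (0:ℝ)..h, (u / 2) ^ r) = 2 * ∫ u in (0:ℝ)..(h/2), u ^ r := by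
    have := intervalIntegral.integral_comp_div (a := (0:ℝ)) (b := h)
      (c := 2) (f := fun u : ℝ => u ^ r) two_ne_zero
    simpa [smul_eq_mul] using this
  have e3 : (∫ u in (0:ℝ)..(h/2), u ^ r) = (h / 2) ^ (r + 1) / (r + 1) := by
    rw [integral_rpow (Or.inl hr)]
    rw [Real.zero_rpow (by linarith : r + 1 ≠ 0)]
    ring
  rw [e1, e2, e3]; ring

lemma my_key (β h p q : ℝ) (hp0 : 0 ≤ p) (hp1 : p ≤ 1) (hq0 : 0 ≤ q) (hq1 : q ≤ 1)
    (hpq : 0 < p + q) (hh : 0 ≤ h) :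
    |Real.sin (β + h) - Real.sin β - h * Real.cos β| ≤
      h ^ (p + q + 1) / ((2:ℝ) ^ (p + q - 1) * (p + q + 1)) +
      q * h ^ (p + q) * |β| / ((2:ℝ) ^ (p + q - 2) * (p + q)) := by
  have heq : (∫ t in β..(β + h), (Real.cos t - Real.cos β))
      = Real.sin (β + h) - Real.sin β - h * Real.cos β := by
    rw [intervalIntegral.integral_sub (Real.continuous_cos.intervalIntegrable _ _)
      intervalIntegrable_const]
    rw [integral_cos, intervalIntegral.integral_const]
    simp [smul_eq_mul]
  -- the bound function
  set B : ℝ → ℝ := fun t => 2 * ((t - β) / 2) ^ (p + q) + 2 * q * |β| * ((t - β) / 2) ^ (p + q - 1)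
    with hB
  have hintB : IntervalIntegrable B volume β (β + h) := by
    apply IntervalIntegrable.add
    · exact (my_integrable β h (p + q) (by linarith)).const_mul 2
    · exact (my_integrable β h (p + q - 1) (by linarith)).const_mul _
  have hbound : ∀ t ∈ Set.Ioc β (β + h), |Real.cos t - Real.cos β| ≤ B t := by
    intro t ht
    set a : ℝ := (t - β) / 2 with ha
    have ha0 : 0 < a := by
      have := ht.1; dsimp [a]; linarith
    have habs : |a| = a := abs_of_pos ha0
    rw [Real.cos_sub_cos]
    have h1 : |Real.sin ((t - β) / 2)| ≤ a ^ p := by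
      have := my_abs_sin_le_rpow hp0 hp1 ((t - β) / 2)
      rwa [← ha, habs] at this
    have h2 : |Real.sin ((t + β) / 2)| ≤ (a + |β|) ^ q := by
      have e : (t + β) / 2 = a + β := by dsimp [a]; ring
      calc |Real.sin ((t + β) / 2)| ≤ |(t + β) / 2| ^ q := my_abs_sin_le_rpow hq0 hq1 _
        _ ≤ (a + |β|) ^ q := by
            apply Real.rpow_le_rpow (abs_nonneg _) _ hq0
            rw [e]
            calc |a + β| ≤ |a| + |β| := abs_add_le a β
              _ = a + |β| := by rw [habs]
    have h3 : (a + |β|) ^ q ≤ a ^ q + q * |β| * a ^ (q - 1) :=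
      my_bernoulli ha0 (abs_nonneg β) hq0 hq1
    have hprod : |(-2) * Real.sin ((t + β) / 2) * Real.sin ((t - β) / 2)|
        = 2 * |Real.sin ((t + β) / 2)| * |Real.sin ((t - β) / 2)| := by
      rw [abs_mul, abs_mul]
      norm_num
    rw [hprod]
    calc 2 * |Real.sin ((t + β) / 2)| * |Real.sin ((t - β) / 2)|
        ≤ 2 * ((a + |β|) ^ q) * (a ^ p) := by
          apply mul_le_mul _ h1 (abs_nonneg _) (by positivity)
          exact mul_le_mul_of_nonneg_left h2 (by norm_num)
      _ ≤ 2 * (a ^ q + q * |β| * a ^ (q - 1)) * (a ^ p) := by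
          apply mul_le_mul_of_nonneg_right _ (Real.rpow_nonneg ha0.le p)
          exact mul_le_mul_of_nonneg_left h3 (by norm_num)
      _ = B t := by
          rw [hB]
          dsimp only
          rw [← ha]
          have e1 : a ^ q * a ^ p = a ^ (p + q) := by
            rw [← Real.rpow_add ha0, show q + p = p + q by ring]
          have e2 : a ^ (q - 1) * a ^ p = a ^ (p + q - 1) := by
            rw [← Real.rpow_add ha0, show q - 1 + p = p + q - 1 by ring]
          linear_combination 2 * e1 + 2 * q * |β| * e2
  have hmain : |Real.sin (β + h) - Real.sin β - h * Real.cos β| ≤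
      |∫ t in β..(β + h), B t| := by
    rw [← heq, ← Real.norm_eq_abs]
    apply intervalIntegral.norm_integral_le_abs_of_norm_le _ hintB
    rw [Set.uIoc_of_le (by linarith : β ≤ β + h)]
    refine (ae_restrict_iff' measurableSet_Ioc).2 (Filter.Eventually.of_forall ?_)
    intro t ht
    rw [Real.norm_eq_abs]
    exact hbound t ht
  have hval : (∫ t in β..(β + h), B t) =
      h ^ (p + q + 1) / ((2:ℝ) ^ (p + q - 1) * (p + q + 1)) +
      q * h ^ (p + q) * |β| / ((2:ℝ) ^ (p + q - 2) * (p + q)) := by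
    rw [hB]
    rw [intervalIntegral.integral_add ((my_integrable β h (p + q) (by linarith)).const_mul 2)
      ((my_integrable β h (p + q - 1) (by linarith)).const_mul _)]
    rw [intervalIntegral.integral_const_mul, intervalIntegral.integral_const_mul]
    rw [my_integral_eval β h (p + q) (by linarith), my_integral_eval β h (p + q - 1) (by linarith)]
    have hd : (h / 2) ^ (p + q + 1) = h ^ (p + q + 1) / 2 ^ (p + q + 1) :=
      Real.div_rpow hh (by norm_num) _
    have hd2 : (h / 2) ^ (p + q - 1 + 1) = h ^ (p + q) / 2 ^ (p + q) := by
      rw [show p + q - 1 + 1 = p + q by ring]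
      exact Real.div_rpow hh (by norm_num) _
    have h2a : (2:ℝ) ^ (p + q + 1) = 2 ^ (p + q - 1) * 4 := by
      rw [show p + q + 1 = (p + q - 1) + 2 by ring, Real.rpow_add (by norm_num : (0:ℝ) < 2)]
      norm_num
    have h2b : (2:ℝ) ^ (p + q) = 2 ^ (p + q - 2) * 4 := by
      rw [show p + q = (p + q - 2) + 2 by ring, Real.rpow_add (by norm_num : (0:ℝ) < 2)]
      norm_num
    rw [hd, hd2, h2a, h2b]
    have hpos1 : (0:ℝ) < 2 ^ (p + q - 1) := Real.rpow_pos_of_pos (by norm_num) _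
    have hpos2 : (0:ℝ) < 2 ^ (p + q - 2) := Real.rpow_pos_of_pos (by norm_num) _
    have hne1 : p + q ≠ 0 := by linarith
    have hne2 : p + q + 1 ≠ 0 := by linarith
    have hne3 : p + q - 1 + 1 ≠ 0 := by linarith
    field_simp
    ring
  have hnn : 0 ≤ h ^ (p + q + 1) / ((2:ℝ) ^ (p + q - 1) * (p + q + 1)) +
      q * h ^ (p + q) * |β| / ((2:ℝ) ^ (p + q - 2) * (p + q)) := by
    have hpos1 : (0:ℝ) < 2 ^ (p + q - 1) := Real.rpow_pos_of_pos (by norm_num) _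
    have hpos2 : (0:ℝ) < 2 ^ (p + q - 2) := Real.rpow_pos_of_pos (by norm_num) _
    have := Real.rpow_nonneg hh (p + q + 1)
    have := Real.rpow_nonneg hh (p + q)
    positivity
  rw [hval, abs_of_nonneg hnn] at hmain
  exact hmain

theorem stmt_0 (α β p q : ℝ) (hp : p ∈ Set.Icc (0:ℝ) 1) (hq : q ∈ Set.Icc (0:ℝ) 1)
    (hpq : 0 < p + q) :
    |Real.sin α - Real.sin β - (α - β) * Real.cos β| ≤
      |α - β| ^ (p + q + 1) / ((2:ℝ) ^ (p + q - 1) * (p + q + 1)) +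
      q * |α - β| ^ (p + q) * |β| / ((2:ℝ) ^ (p + q - 2) * (p + q)) := by
  obtain ⟨hp0, hp1⟩ := hp
  obtain ⟨hq0, hq1⟩ := hq
  rcases le_total β α with hle | hle
  · have key := my_key β (α - β) p q hp0 hp1 hq0 hq1 hpq (by linarith)
    rw [abs_of_nonneg (by linarith : (0:ℝ) ≤ α - β)]
    have e : β + (α - β) = α := by ring
    rw [e] at key
    exact key
  · have key := my_key (-β) (β - α) p q hp0 hp1 hq0 hq1 hpq (by linarith)
    rw [show -β + (β - α) = -α by ring] at key
    have e : Real.sin (-α) - Real.sin (-β) - (β - α) * Real.cos (-β)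
        = -(Real.sin α - Real.sin β - (α - β) * Real.cos β) := by
      rw [Real.sin_neg, Real.sin_neg, Real.cos_neg]; ring
    rw [e, abs_neg, abs_neg] at key
    rw [abs_sub_comm α β, abs_of_nonneg (by linarith : 0 ≤ β - α)]
    exact key
end

section
/- Let f : ℝ → ℝ be defined (up to constants) by a derivative f' satisfying −log(1 − t + t²/2) ≤ f'(t) ≤ log(1 + t + t²/2) for all t ∈ ℝ. Then the function t ↦ sin t satisfies the same bounds: −log(1 − t + t²/2) ≤ sin t ≤ log(1 + t + t²/2) for all t ∈ ℝ. -/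
open Real

private lemma fpos16 (t : ℝ) : 0 < 1 + t + t ^ 2 / 2 := by nlinarith [sq_nonneg (t + 1)]

private noncomputable def g16 (t : ℝ) : ℝ := Real.log (1 + t + t ^ 2 / 2) - Real.sin t

private lemma g16_deriv (t : ℝ) :
    HasDerivAt g16 ((1 + t) / (1 + t + t ^ 2 / 2) - Real.cos t) t := by
  have h1 : HasDerivAt (fun t : ℝ => 1 + t + t ^ 2 / 2) (1 + t) t := by
    have := ((hasDerivAt_id t).const_add 1).add ((hasDerivAt_pow 2 t).div_const 2)
    exact this.congr_deriv (by norm_num)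
  exact (h1.log (fpos16 t).ne').sub (Real.hasDerivAt_sin t)

private lemma g16_diff : Differentiable ℝ g16 := fun t => (g16_deriv t).differentiableAt

private lemma g16_zero : g16 0 = 0 := by simp [g16]

private lemma g16_nonneg_of_mem_pos {t : ℝ} (h0 : 0 ≤ t) (h1 : t ≤ 1.2) : 0 ≤ g16 t := by
  have mono : MonotoneOn g16 (Set.Icc (0 : ℝ) 1.2) := by
    apply monotoneOn_of_deriv_nonneg (convex_Icc _ _) g16_diff.continuous.continuousOn
      g16_diff.differentiableOn
    intro x hx
    rw [interior_Icc] at hx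
    rw [(g16_deriv x).deriv]
    have hf := fpos16 x
    have key : Real.cos x * (1 + x + x ^ 2 / 2) ≤ 1 + x := by
      rcases le_total x 1 with hx1 | hx1
      · have hb := Real.cos_bound (x := x) (by rw [abs_of_nonneg hx.1.le]; exact hx1)
        rw [abs_of_nonneg hx.1.le] at hb
        have hcu : Real.cos x ≤ 1 - x ^ 2 / 2 + x ^ 4 * (5 / 96) := by
          linarith [(abs_le.1 hb).2]
        have h2 : Real.cos x * (1 + x + x ^ 2 / 2) ≤
            (1 - x ^ 2 / 2 + x ^ 4 * (5 / 96)) * (1 + x + x ^ 2 / 2) :=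
          mul_le_mul_of_nonneg_right hcu hf.le
        have hx0 : (0:ℝ) ≤ x := hx.1.le
        nlinarith [pow_nonneg hx0 3, pow_nonneg hx0 4, pow_nonneg hx0 5, pow_nonneg hx0 6]
      · have hc : Real.cos x ≤ Real.cos 1 := by
          apply Real.cos_le_cos_of_nonneg_of_le_pi zero_le_one _ hx1
          linarith [Real.pi_gt_three, hx.2]
        have hc1 : Real.cos 1 ≤ 2 / 3 := Real.cos_one_le.trans (by norm_num)
        nlinarith [hx.2.le]
    rw [sub_nonneg]
    exact (le_div_iff₀ hf).2 key
  have := mono (Set.left_mem_Icc.2 (by norm_num)) (Set.mem_Icc.2 ⟨h0, h1⟩) h0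
  rwa [g16_zero] at this


private lemma g16_nonneg_of_mem_neg {t : ℝ} (h0 : -2 ≤ t) (h1 : t ≤ 0) : 0 ≤ g16 t := by
  have anti : AntitoneOn g16 (Set.Icc (-2 : ℝ) 0) := by
    apply antitoneOn_of_deriv_nonpos (convex_Icc _ _) g16_diff.continuous.continuousOn
      g16_diff.differentiableOn
    intro x hx
    rw [interior_Icc] at hx
    rw [(g16_deriv x).deriv]
    have hf := fpos16 x
    have key : 1 + x ≤ Real.cos x * (1 + x + x ^ 2 / 2) := by
      have hcl : 1 - x ^ 2 / 2 ≤ Real.cos x := Real.one_sub_sq_div_two_le_cos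
      have h2 : (1 - x ^ 2 / 2) * (1 + x + x ^ 2 / 2) ≤ Real.cos x * (1 + x + x ^ 2 / 2) :=
        mul_le_mul_of_nonneg_right hcl hf.le
      nlinarith [sq_nonneg x, hx.1.le, hx.2.le, mul_nonneg (mul_nonneg (neg_nonneg.2 hx.2.le) (neg_nonneg.2 hx.2.le)) (neg_nonneg.2 hx.2.le)]
    rw [sub_nonpos]
    exact (div_le_iff₀ hf).2 key
  have := anti (Set.mem_Icc.2 ⟨h0, h1⟩) (Set.right_mem_Icc.2 (by norm_num)) h1
  rwa [g16_zero] at this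

private lemma upper16 (t : ℝ) : Real.sin t ≤ Real.log (1 + t + t ^ 2 / 2) := by
  have hf := fpos16 t
  rcases le_total t 0 with ht | ht
  · rcases le_total (-2 : ℝ) t with h2 | h2
    · have := g16_nonneg_of_mem_neg h2 ht
      simpa [g16, sub_nonneg] using this
    · rcases le_total (-Real.pi) t with hp | hp
      · -- -π ≤ t ≤ -2 : sin t ≤ 0 ≤ log
        have hs : Real.sin t ≤ 0 := Real.sin_nonpos_of_nonpos_of_neg_pi_le ht hp
        have hl : 0 ≤ Real.log (1 + t + t ^ 2 / 2) := Real.log_nonneg (by nlinarith)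
        linarith
      · -- t ≤ -π : f ≥ e, log ≥ 1 ≥ sin
        have hpi1 : Real.pi < 3.141593 := Real.pi_lt_d6
        have hpi2 : 3.141592 < Real.pi := Real.pi_gt_d6
        have he : Real.exp 1 < 2.7182818286 := Real.exp_one_lt_d9
        have hfe : Real.exp 1 ≤ 1 + t + t ^ 2 / 2 := by nlinarith [sq_nonneg (t + Real.pi)]
        have : (1 : ℝ) ≤ Real.log (1 + t + t ^ 2 / 2) :=
          (Real.le_log_iff_exp_le hf).2 hfe
        linarith [Real.sin_le_one t]
  · rcases le_total t 1.2 with h2 | h2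
    · have := g16_nonneg_of_mem_pos ht h2
      simpa [g16, sub_nonneg] using this
    · have he : Real.exp 1 < 2.7182818286 := Real.exp_one_lt_d9
      have hfe : Real.exp 1 ≤ 1 + t + t ^ 2 / 2 := by nlinarith
      have : (1 : ℝ) ≤ Real.log (1 + t + t ^ 2 / 2) := (Real.le_log_iff_exp_le hf).2 hfe
      linarith [Real.sin_le_one t]

theorem stmt_16 (t : ℝ) :
    -Real.log (1 - t + t ^ 2 / 2) ≤ Real.sin t ∧
    Real.sin t ≤ Real.log (1 + t + t ^ 2 / 2) := by
  constructor
  · have h := upper16 (-t)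
    rw [Real.sin_neg] at h
    have : 1 + -t + (-t) ^ 2 / 2 = 1 - t + t ^ 2 / 2 := by ring
    rw [this] at h
    linarith
  · exact upper16 t
end
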